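/- (Proposition 2: Generalized Preference Monotonicity) Suppose U : ℝ → Fin D → ℝ satisfies the single-crossing property in the natural ordering. Let Q : Finset (Fin D) → ℝ be nonnegative with Q ∅ = 0. Let ν₁ < ν₂ and suppose that for i ∈ {1, 2} and every nonempty K ⊆ Fin D there is an alternative mᵢ(K) ∈ K with U νᵢ (mᵢ K) > U νᵢ k for all k ∈ K with k ≠ mᵢ K. Then for every natural number J, Σ_{K ⊆ Fin D} Q K · (indicator that the index of m₁ K is less than J) ≥ Σ_{K ⊆ Fin D} Q K · (indicator that the index of m₂ K is less than J). -/
import Mathlib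


/-- Proposition 2 (Generalized Preference Monotonicity): under the single-crossing
property in the natural ordering and a consideration mechanism `Q` independent of
preferences, the probability of choosing one of the first `J` alternatives is
nonincreasing in the preference parameter. Here `mᵢ K` is the strict maximizer of
`U νᵢ` on the consideration set `K`. -/
theorem generalized_preference_monotonicity (D : ℕ) (U : ℝ → Fin D → ℝ)
    (c : Fin D → Fin D → ℝ)
    (hSCP : ∀ j k : Fin D, j < k →
      (∀ ν, ν < c j k → U ν j > U ν k) ∧ U (c j k) j = U (c j k) k ∧
        (∀ ν, ν > c j k → U ν j < U ν k))
    (Q : Finset (Fin D) → ℝ) (hQ : ∀ K, 0 ≤ Q K) (hQ0 : Q ∅ = 0)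
    (ν₁ ν₂ : ℝ) (hν : ν₁ < ν₂)
    (m₁ m₂ : Finset (Fin D) → Fin D)
    (hm₁ : ∀ K : Finset (Fin D), K.Nonempty →
      m₁ K ∈ K ∧ ∀ k ∈ K, k ≠ m₁ K → U ν₁ (m₁ K) > U ν₁ k)
    (hm₂ : ∀ K : Finset (Fin D), K.Nonempty →
      m₂ K ∈ K ∧ ∀ k ∈ K, k ≠ m₂ K → U ν₂ (m₂ K) > U ν₂ k) :
    ∀ J : ℕ,
      ∑ K : Finset (Fin D), Q K * (if (m₁ K : ℕ) < J then (1 : ℝ) else 0) ≥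
      ∑ K : Finset (Fin D), Q K * (if (m₂ K : ℕ) < J then (1 : ℝ) else 0) := by
  intro J
  apply Finset.sum_le_sum
  intro K _
  rcases eq_or_ne K ∅ with rfl | hKne
  · simp [hQ0]
  · have hK : K.Nonempty := Finset.nonempty_iff_ne_empty.mpr hKne
    obtain ⟨h1mem, h1max⟩ := hm₁ K hK
    obtain ⟨h2mem, h2max⟩ := hm₂ K hK
    -- key: m₁ K ≤ m₂ K
    have hle : m₁ K ≤ m₂ K := by
      by_contra h
      push_neg at h
      have hne : m₂ K ≠ m₁ K := ne_of_lt h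
      have hU1 : U ν₁ (m₁ K) > U ν₁ (m₂ K) := h1max _ h2mem hne
      obtain ⟨hlt, heq, hgt⟩ := hSCP (m₂ K) (m₁ K) h
      -- not ν₁ < c, since that would give U ν₁ (m₂ K) > U ν₁ (m₁ K)
      have hge : c (m₂ K) (m₁ K) ≤ ν₁ := by
        by_contra hc
        push_neg at hc
        exact absurd (hlt ν₁ hc) (not_lt.mpr hU1.le)
      have : U ν₂ (m₂ K) < U ν₂ (m₁ K) := hgt ν₂ (lt_of_le_of_lt hge hν)
      have hne' : m₁ K ≠ m₂ K := fun e => hne e.symm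
      exact absurd (h2max _ h1mem hne') (not_lt.mpr this.le)
    have hmono : (if (m₂ K : ℕ) < J then (1 : ℝ) else 0) ≤
        (if (m₁ K : ℕ) < J then (1 : ℝ) else 0) := by
      by_cases h2 : (m₂ K : ℕ) < J
      · have h1 : (m₁ K : ℕ) < J := lt_of_le_of_lt (Fin.le_iff_val_le_val.mp hle) h2
        simp [h1, h2]
      · simp [h2]
        split <;> norm_num
    exact mul_le_mul_of_nonneg_left hmono (hQ K)
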